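/- The linear map σ₁ on D₁ defined by σ₁(L(x)) = ∂(x)·I(x) and σ₁(I(x)) = 0 for all x ∈ A is a derivation of the Lie algebra D₁. -/
import Mathlib


/-- The linear map `σ₁` on `D₁` with `σ₁(L x) = ∂(x)·I(x)` and `σ₁(I x) = 0` is a
derivation of the Lie algebra `D₁`. -/
theorem stmt_10 {F : Type*} [Field F] [CharZero F]
    {A : Type*} [AddCommGroup A]
    (d : A →+ F) (hd : ∀ x : A, d x = 0 → x = 0)
    {D : Type*} [LieRing D] [LieAlgebra F D]
    (L I : A → D)
    (hspan : Submodule.span F (Set.range L ∪ Set.range I) = ⊤)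
    (hLL : ∀ x y : A, ⁅L x, L y⁆ = d (y - x) • L (x + y))
    (hLI : ∀ x y : A, ⁅L x, I y⁆ = d y • I (x + y))
    (hII : ∀ x y : A, ⁅I x, I y⁆ = 0)
    (σ : D →ₗ[F] D)
    (hσL : ∀ x : A, σ (L x) = d x • I x)
    (hσI : ∀ x : A, σ (I x) = 0) :
    ∀ u v : D, σ ⁅u, v⁆ = ⁅σ u, v⁆ + ⁅u, σ v⁆ := by
  have hIL : ∀ x y : A, ⁅I x, L y⁆ = -(d x • I (y + x)) := by
    intro x y
    rw [← lie_skew, hLI]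
  have key : ∀ u ∈ (Set.range L ∪ Set.range I),
      ∀ v ∈ (Set.range L ∪ Set.range I), σ ⁅u, v⁆ = ⁅σ u, v⁆ + ⁅u, σ v⁆ := by
    rintro u (⟨x, rfl⟩ | ⟨x, rfl⟩) v (⟨y, rfl⟩ | ⟨y, rfl⟩)
    · rw [hLL, map_smul, hσL, hσL, hσL, smul_lie, lie_smul, hIL, hLI,
        smul_neg, smul_smul, smul_smul, smul_smul, add_comm y x, ← neg_smul, ← add_smul]
      congr 1
      simp only [map_sub, map_add]
      ring
    · rw [hLI, map_smul, hσI, hσL, hσI, smul_zero, smul_lie, hII, lie_zero,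
        smul_zero, add_zero]
    · rw [hIL, map_neg, map_smul, hσI, hσI, hσL, smul_zero, neg_zero, zero_lie,
        lie_smul, hII, smul_zero, zero_add]
    · rw [hII, map_zero, hσI, hσI, zero_lie, lie_zero, add_zero]
  intro u v
  have hu : u ∈ Submodule.span F (Set.range L ∪ Set.range I) := by rw [hspan]; trivial
  have hv : v ∈ Submodule.span F (Set.range L ∪ Set.range I) := by rw [hspan]; trivial
  induction hu using Submodule.span_induction with
  | mem u hu =>
    induction hv using Submodule.span_induction with
    | mem v hv => exact key u hu v hv
    | zero => simp
    | add a b _ _ ha hb =>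
      rw [lie_add, map_add, ha, hb, map_add, lie_add, lie_add]
      abel
    | smul c a _ ha =>
      rw [lie_smul, map_smul, ha, smul_add, map_smul, lie_smul]
      rw [lie_smul]
  | zero => simp
  | add a b _ _ ha hb =>
    rw [add_lie, map_add, ha, hb, map_add, add_lie, add_lie]
    abel
  | smul c a _ ha =>
    rw [smul_lie, map_smul, ha, smul_add, map_smul, smul_lie]
    rw [smul_lie]
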